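/- Fix a constant q > 0 and the bowl transform ψ : ℝ^p → ℝ^(p+1). Then ψ is redescending: ψ(x) converges to the origin of ℝ^(p+1) as ‖x‖ → ∞; that is, for every ε > 0 there exists R > 0 such that ‖x‖ > R implies ‖ψ(x)‖ < ε. -/

import Mathlib

open Real

/-- The bowl transform `ψ : ℝ^p → ℝ^(p+1)`.  With `u(x) = tanh(‖x‖/q)`, the first `p`
coordinates are `v₁(x) = 10·u(x)²·(1−u(x))²·x` and the last coordinate is
`v₂(x) = 10·u(x)⁶·(1−u(x))²`. -/
noncomputable def bowl (p : ℕ) (q : ℝ) (x : EuclideanSpace ℝ (Fin p)) :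
    EuclideanSpace ℝ (Fin (p + 1)) :=
  WithLp.toLp 2 (Fin.snoc
    (fun i : Fin p =>
      10 * Real.tanh (‖x‖ / q) ^ 2 * (1 - Real.tanh (‖x‖ / q)) ^ 2 * x i)
    (10 * Real.tanh (‖x‖ / q) ^ 6 * (1 - Real.tanh (‖x‖ / q)) ^ 2))

lemma tanh_mem_Ico (t : ℝ) (ht : 0 ≤ t) : 0 ≤ Real.tanh t ∧ Real.tanh t < 1 := by
  rw [Real.tanh_eq_sinh_div_cosh, Real.sinh_eq, Real.cosh_eq]
  have h1 : Real.exp (-t) ≤ Real.exp t := Real.exp_le_exp.2 (by linarith)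
  have h2 : 0 < Real.exp (-t) := Real.exp_pos _
  have h3 : 0 < Real.exp t + Real.exp (-t) := by positivity
  constructor
  · apply div_nonneg _ (by positivity)
    linarith
  · rw [div_lt_one (by positivity)]
    linarith

lemma one_sub_tanh_le (t : ℝ) (ht : 0 < t) : 1 - Real.tanh t ≤ 1 / t := by
  rw [Real.tanh_eq_sinh_div_cosh, Real.sinh_eq, Real.cosh_eq]
  have h2 : 0 < Real.exp (-t) := Real.exp_pos _
  have h4 : 0 < Real.exp t := Real.exp_pos _
  have h3 : 0 < (Real.exp t + Real.exp (-t)) / 2 := by positivity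
  have key : 1 - (Real.exp t - Real.exp (-t)) / 2 / ((Real.exp t + Real.exp (-t)) / 2)
      = 2 * Real.exp (-t) / (Real.exp t + Real.exp (-t)) := by
    field_simp
    ring
  rw [key]
  rw [div_le_div_iff₀ (by positivity) ht]
  have hexp : 2 * t + 1 ≤ Real.exp (2 * t) := by
    have := Real.add_one_le_exp (2 * t)
    linarith
  have hsq : Real.exp (2 * t) = Real.exp t * Real.exp t := by
    rw [← Real.exp_add]; ring_nf
  have hinv : Real.exp (-t) * Real.exp t = 1 := by
    rw [← Real.exp_add]; simp
  nlinarith [mul_pos h2 ht, mul_pos h4 ht]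

lemma sqrt_add_le' (a b : ℝ) (ha : 0 ≤ a) (hb : 0 ≤ b) :
    Real.sqrt (a + b) ≤ Real.sqrt a + Real.sqrt b := by
  rw [show a + b = Real.sqrt a ^ 2 + Real.sqrt b ^ 2 by
    rw [Real.sq_sqrt ha, Real.sq_sqrt hb]]
  have h1 : 0 ≤ Real.sqrt a := Real.sqrt_nonneg _
  have h2 : 0 ≤ Real.sqrt b := Real.sqrt_nonneg _
  rw [show Real.sqrt a + Real.sqrt b =
    Real.sqrt ((Real.sqrt a + Real.sqrt b) ^ 2) by rw [Real.sqrt_sq (by positivity)]]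
  apply Real.sqrt_le_sqrt
  nlinarith

/-- for `q > 0`, the bowl transform `ψ : ℝ^p → ℝ^(p+1)` is redescending:
`ψ(x) → 0` as `‖x‖ → ∞`, i.e. for every `ε > 0` there is `R > 0` such that
`‖x‖ > R` implies `‖ψ(x)‖ < ε`. -/
theorem bowl_redescending (p : ℕ) (q : ℝ) (hq : 0 < q) :
    ∀ ε : ℝ, 0 < ε → ∃ R : ℝ, 0 < R ∧
      ∀ x : EuclideanSpace ℝ (Fin p), R < ‖x‖ → ‖bowl p q x‖ < ε := by
  intro ε hε
  refine ⟨max 1 (20 * q ^ 2 / ε), lt_max_of_lt_left one_pos, fun x hx => ?_⟩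
  have hx1 : 1 < ‖x‖ := lt_of_le_of_lt (le_max_left _ _) hx
  have hx0 : 0 < ‖x‖ := lt_trans one_pos hx1
  set t : ℝ := ‖x‖ / q with ht_def
  have ht : 0 < t := by positivity
  set u : ℝ := Real.tanh t with hu_def
  obtain ⟨hu0, hu1⟩ := tanh_mem_Ico t ht.le
  have husub : 0 ≤ 1 - u := by linarith
  have hbound : 1 - u ≤ q / ‖x‖ := by
    have := one_sub_tanh_le t ht
    rwa [ht_def, one_div, inv_div] at this
  set c : ℝ := 10 * u ^ 2 * (1 - u) ^ 2 with hc_def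
  have hc0 : 0 ≤ c := by positivity
  have hv2 : (0:ℝ) ≤ 10 * u ^ 6 * (1 - u) ^ 2 := by positivity
  -- norm computation
  have hnorm : ‖bowl p q x‖ ≤ c * ‖x‖ + 10 * u ^ 6 * (1 - u) ^ 2 := by
    rw [EuclideanSpace.norm_eq]
    have hsum : ∑ i : Fin (p + 1), ‖(bowl p q x) i‖ ^ 2
        = c ^ 2 * ∑ i : Fin p, ‖x i‖ ^ 2 + (10 * u ^ 6 * (1 - u) ^ 2) ^ 2 := by
      rw [Fin.sum_univ_castSucc]
      simp only [bowl, WithLp.ofLp_toLp, Fin.snoc_castSucc, Fin.snoc_last]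
      congr 1
      · rw [Finset.mul_sum]
        refine Finset.sum_congr rfl fun i _ => ?_
        rw [norm_mul, mul_pow]
        congr 1
        rw [Real.norm_eq_abs, sq_abs]
      · rw [Real.norm_eq_abs, sq_abs]
    rw [hsum]
    calc Real.sqrt (c ^ 2 * ∑ i : Fin p, ‖x i‖ ^ 2 + (10 * u ^ 6 * (1 - u) ^ 2) ^ 2)
        ≤ Real.sqrt (c ^ 2 * ∑ i : Fin p, ‖x i‖ ^ 2)
          + Real.sqrt ((10 * u ^ 6 * (1 - u) ^ 2) ^ 2) := by
          apply sqrt_add_le' _ _ (by positivity) (by positivity)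
      _ = c * ‖x‖ + 10 * u ^ 6 * (1 - u) ^ 2 := by
          rw [Real.sqrt_mul (by positivity), Real.sqrt_sq hc0, Real.sqrt_sq hv2]
          congr 1
          rw [EuclideanSpace.norm_eq]
  -- bound the RHS
  have hub : u ^ 2 ≤ 1 := pow_le_one₀ hu0 hu1.le
  have hu6 : u ^ 6 ≤ 1 := pow_le_one₀ hu0 hu1.le
  have hsubsq : (1 - u) ^ 2 ≤ (q / ‖x‖) ^ 2 := by
    apply pow_le_pow_left₀ husub hbound
  have hq2 : (q / ‖x‖) ^ 2 = q ^ 2 / ‖x‖ ^ 2 := by rw [div_pow]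
  have h1 : c * ‖x‖ ≤ 10 * q ^ 2 / ‖x‖ := by
    rw [hc_def]
    have : 10 * u ^ 2 * (1 - u) ^ 2 ≤ 10 * (q ^ 2 / ‖x‖ ^ 2) := by
      calc 10 * u ^ 2 * (1 - u) ^ 2 ≤ 10 * 1 * (q ^ 2 / ‖x‖ ^ 2) := by
            apply mul_le_mul (by nlinarith) (by rw [← hq2]; exact hsubsq)
              (by positivity) (by norm_num)
        _ = 10 * (q ^ 2 / ‖x‖ ^ 2) := by ring
    calc 10 * u ^ 2 * (1 - u) ^ 2 * ‖x‖ ≤ 10 * (q ^ 2 / ‖x‖ ^ 2) * ‖x‖ :=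
          mul_le_mul_of_nonneg_right this hx0.le
      _ = 10 * q ^ 2 / ‖x‖ := by field_simp
  have h2 : 10 * u ^ 6 * (1 - u) ^ 2 ≤ 10 * q ^ 2 / ‖x‖ := by
    have step : 10 * u ^ 6 * (1 - u) ^ 2 ≤ 10 * (q ^ 2 / ‖x‖ ^ 2) := by
      calc 10 * u ^ 6 * (1 - u) ^ 2 ≤ 10 * 1 * (q ^ 2 / ‖x‖ ^ 2) := by
            apply mul_le_mul (by nlinarith) (by rw [← hq2]; exact hsubsq)
              (by positivity) (by norm_num)
        _ = 10 * (q ^ 2 / ‖x‖ ^ 2) := by ring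
    calc 10 * u ^ 6 * (1 - u) ^ 2 ≤ 10 * (q ^ 2 / ‖x‖ ^ 2) := step
      _ ≤ 10 * q ^ 2 / ‖x‖ := by
          rw [mul_div_assoc]
          apply mul_le_mul_of_nonneg_left _ (by norm_num)
          rw [div_le_div_iff₀ (by positivity) hx0]
          nlinarith [mul_nonneg (mul_nonneg (sq_nonneg q) hx0.le) (sub_nonneg.2 hx1.le)]
  have hfinal : 20 * q ^ 2 / ‖x‖ < ε := by
    have hR : 20 * q ^ 2 / ε < ‖x‖ := lt_of_le_of_lt (le_max_right _ _) hx
    rw [div_lt_iff₀ hx0]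
    calc 20 * q ^ 2 = (20 * q ^ 2 / ε) * ε := by field_simp
      _ < ε * ‖x‖ := by
          rw [mul_comm ε ‖x‖]; exact mul_lt_mul_of_pos_right hR hε
  calc ‖bowl p q x‖ ≤ c * ‖x‖ + 10 * u ^ 6 * (1 - u) ^ 2 := hnorm
    _ ≤ 10 * q ^ 2 / ‖x‖ + 10 * q ^ 2 / ‖x‖ := add_le_add h1 h2
    _ = 20 * q ^ 2 / ‖x‖ := by ring
    _ < ε := hfinal
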